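/- Let a be symmetric positive definite, A skew-symmetric (both d×d), M ∈ ℝ^{d×k} of full column rank, and V ∈ ℝ^{d×(d−k)} a matrix with linearly independent columns satisfying VᵀM = 0. Then, with Φ := Mᵀ(a−A)M and Π := Vᵀ(a−A)⁻¹V, the identity V Π⁻¹ Vᵀ (a−A)⁻¹ + (a−A) M Φ⁻¹ Mᵀ = I_d holds. -/

import Mathlib

open Matrix

lemma quad_isUnit {n : ℕ} (B : Matrix (Fin n) (Fin n) ℝ)
    (h : ∀ x : Fin n → ℝ, x ≠ 0 → 0 < x ⬝ᵥ B *ᵥ x) : IsUnit B := by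
  rw [← Matrix.mulVec_injective_iff_isUnit]
  have hcoe : B.mulVec = ⇑(Matrix.mulVecLin B) := rfl
  rw [hcoe, injective_iff_map_eq_zero' (Matrix.mulVecLin B)]
  intro x
  constructor
  · intro hx
    by_contra hx0
    have := h x hx0
    rw [show B *ᵥ x = 0 from hx] at this
    simp at this
  · intro hx; simp [hx]

lemma skew_dot {n : ℕ} (A : Matrix (Fin n) (Fin n) ℝ) (hA : Aᵀ = -A) (x : Fin n → ℝ) :
    x ⬝ᵥ A *ᵥ x = 0 := by
  have h : x ⬝ᵥ A *ᵥ x = -(x ⬝ᵥ A *ᵥ x) := by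
    calc x ⬝ᵥ A *ᵥ x = (x ᵥ* A) ⬝ᵥ x := Matrix.dotProduct_mulVec x A x
      _ = (Aᵀ *ᵥ x) ⬝ᵥ x := by rw [Matrix.mulVec_transpose]
      _ = ((-A) *ᵥ x) ⬝ᵥ x := by rw [hA]
      _ = -((A *ᵥ x) ⬝ᵥ x) := by rw [Matrix.neg_mulVec, neg_dotProduct]
      _ = -(x ⬝ᵥ A *ᵥ x) := by rw [dotProduct_comm]
  linarith

lemma dot_conj {n m : ℕ} (B : Matrix (Fin n) (Fin n) ℝ) (M : Matrix (Fin n) (Fin m) ℝ)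
    (u : Fin m → ℝ) : u ⬝ᵥ (Mᵀ * B * M) *ᵥ u = (M *ᵥ u) ⬝ᵥ B *ᵥ (M *ᵥ u) := by
  rw [Matrix.mul_assoc, ← Matrix.mulVec_mulVec, Matrix.dotProduct_mulVec,
    Matrix.vecMul_transpose, ← Matrix.mulVec_mulVec]

/-- With `Φ := Mᵀ(a-A)M` and `Π := Vᵀ(a-A)⁻¹V`, where `VᵀM = 0` and both `M` and `V` have
full column rank, we have `V Π⁻¹ Vᵀ (a-A)⁻¹ + (a-A) M Φ⁻¹ Mᵀ = I`. -/
theorem stmt5 {d k : ℕ} (hk : k ≤ d) (a A : Matrix (Fin d) (Fin d) ℝ)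
    (M : Matrix (Fin d) (Fin k) ℝ) (V : Matrix (Fin d) (Fin (d - k)) ℝ)
    (ha : a.PosDef) (hA : Aᵀ = -A)
    (hM : Function.Injective M.mulVec) (hV : Function.Injective V.mulVec)
    (hVM : Vᵀ * M = 0) :
    V * (Vᵀ * (a - A)⁻¹ * V)⁻¹ * Vᵀ * (a - A)⁻¹
      + (a - A) * M * (Mᵀ * (a - A) * M)⁻¹ * Mᵀ = 1 := by
  set S := a - A with hS
  have hquadS : ∀ x : Fin d → ℝ, x ≠ 0 → 0 < x ⬝ᵥ S *ᵥ x := by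
    intro x hx
    have hAq : x ⬝ᵥ A *ᵥ x = 0 := skew_dot A hA x
    have := ha.dotProduct_mulVec_pos hx
    simp only [hS, Matrix.sub_mulVec, dotProduct_sub, hAq, sub_zero]
    simpa using this
  have hSu : IsUnit S := quad_isUnit S hquadS
  have hSinv : S⁻¹ * S = 1 := Matrix.nonsing_inv_mul S (Matrix.isUnit_iff_isUnit_det S |>.mp hSu)
  have hSinv' : S * S⁻¹ = 1 := Matrix.mul_nonsing_inv S (Matrix.isUnit_iff_isUnit_det S |>.mp hSu)
  have hquadSi : ∀ y : Fin d → ℝ, y ≠ 0 → 0 < y ⬝ᵥ S⁻¹ *ᵥ y := by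
    intro y hy
    set z := S⁻¹ *ᵥ y with hz
    have hyz : y = S *ᵥ z := by
      rw [hz, Matrix.mulVec_mulVec, hSinv', Matrix.one_mulVec]
    have hz0 : z ≠ 0 := by
      intro h0
      apply hy
      rw [hyz, h0, Matrix.mulVec_zero]
    have heq : y ⬝ᵥ z = z ⬝ᵥ S *ᵥ z := by
      conv_lhs => rw [hyz]
      exact dotProduct_comm _ _
    rw [heq]
    exact hquadS z hz0
  have hM0 : ∀ u : Fin k → ℝ, u ≠ 0 → M *ᵥ u ≠ 0 := by
    intro u hu h0
    exact hu (hM (by simpa using h0))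
  have hV0 : ∀ w : Fin (d - k) → ℝ, w ≠ 0 → V *ᵥ w ≠ 0 := by
    intro w hw h0
    exact hw (hV (by simpa using h0))
  have hPhiU : IsUnit (Mᵀ * S * M) := by
    apply quad_isUnit
    intro u hu
    rw [dot_conj]
    exact hquadS _ (hM0 u hu)
  have hPiU : IsUnit (Vᵀ * S⁻¹ * V) := by
    apply quad_isUnit
    intro w hw
    rw [dot_conj]
    exact hquadSi _ (hV0 w hw)
  have hPhiInv : (Mᵀ * S * M)⁻¹ * (Mᵀ * S * M) = 1 :=
    Matrix.nonsing_inv_mul _ (Matrix.isUnit_iff_isUnit_det _ |>.mp hPhiU)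
  have hPiInv : (Vᵀ * S⁻¹ * V)⁻¹ * (Vᵀ * S⁻¹ * V) = 1 :=
    Matrix.nonsing_inv_mul _ (Matrix.isUnit_iff_isUnit_det _ |>.mp hPiU)
  have hPhiInv' : (Mᵀ * (S * M))⁻¹ * (Mᵀ * (S * M)) = 1 := by
    rw [← Matrix.mul_assoc Mᵀ S M]; exact hPhiInv
  have hPiInv' : (Vᵀ * (S⁻¹ * V))⁻¹ * (Vᵀ * (S⁻¹ * V)) = 1 := by
    rw [← Matrix.mul_assoc Vᵀ S⁻¹ V]; exact hPiInv
  set P := V * (Vᵀ * S⁻¹ * V)⁻¹ * Vᵀ * S⁻¹ + S * M * (Mᵀ * S * M)⁻¹ * Mᵀ with hP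
  have hMV : Mᵀ * V = 0 := by
    have := congrArg Matrix.transpose hVM
    simpa [Matrix.transpose_mul] using this
  have hPV : P * V = V := by
    rw [hP, Matrix.add_mul]
    have h1 : V * (Vᵀ * S⁻¹ * V)⁻¹ * Vᵀ * S⁻¹ * V = V := by
      simp only [Matrix.mul_assoc]
      rw [hPiInv', Matrix.mul_one]
    have h2 : S * M * (Mᵀ * S * M)⁻¹ * Mᵀ * V = 0 := by
      rw [Matrix.mul_assoc, hMV, Matrix.mul_zero]
    rw [h1, h2, add_zero]
  have hPSM : P * (S * M) = S * M := by
    rw [hP, Matrix.add_mul]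
    have h1 : V * (Vᵀ * S⁻¹ * V)⁻¹ * Vᵀ * S⁻¹ * (S * M) = 0 := by
      simp only [Matrix.mul_assoc]
      rw [← Matrix.mul_assoc S⁻¹ S M, hSinv, Matrix.one_mul, hVM]
      simp [Matrix.mul_zero]
    have h2 : S * M * (Mᵀ * S * M)⁻¹ * Mᵀ * (S * M) = S * M := by
      simp only [Matrix.mul_assoc]
      rw [hPhiInv', Matrix.mul_one]
    rw [h1, h2, zero_add]
  -- build the square matrix E
  have hdk : d - k + k = d := Nat.sub_add_cancel hk
  let e : Fin (d - k) ⊕ Fin k ≃ Fin d := finSumFinEquiv.trans (finCongr hdk)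
  set E : Matrix (Fin d) (Fin d) ℝ := (fromCols V (S * M)).submatrix id e.symm with hE
  have hPfc : P * fromCols V (S * M) = fromCols V (S * M) := by
    rw [Matrix.mul_fromCols, hPV, hPSM]
  have hsub : ∀ X : Matrix (Fin d) (Fin (d - k) ⊕ Fin k) ℝ,
      P * X.submatrix id e.symm = (P * X).submatrix id e.symm := by
    intro X
    ext i j
    simp [Matrix.mul_apply, Matrix.submatrix_apply]
  have hPE : P * E = E := by
    rw [hE, hsub, hPfc]
  have hEU : IsUnit E := by
    rw [← Matrix.mulVec_injective_iff_isUnit]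
    have hcoe : E.mulVec = ⇑(Matrix.mulVecLin E) := rfl
    rw [hcoe, injective_iff_map_eq_zero' (Matrix.mulVecLin E)]
    intro x
    constructor
    · intro hx
      have hx' : E *ᵥ x = 0 := hx
      rw [hE, Matrix.submatrix_mulVec_equiv] at hx'
      set y : Fin (d - k) ⊕ Fin k → ℝ := x ∘ e.symm.symm with hy
      have hy0 : fromCols V (S * M) *ᵥ y = 0 := by
        funext s
        exact congrFun hx' s
      have hy0' : V *ᵥ (y ∘ Sum.inl) + (S * M) *ᵥ (y ∘ Sum.inr) = 0 := by
        rw [← Matrix.fromCols_mulVec_sumElim]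
        rw [show Sum.elim (y ∘ Sum.inl) (y ∘ Sum.inr) = y by funext s; cases s <;> rfl]
        exact hy0
      have h2 : (Mᵀ * S * M) *ᵥ (y ∘ Sum.inr) = 0 := by
        have := congrArg (fun v => Mᵀ *ᵥ v) hy0'
        simp only [Matrix.mulVec_add, Matrix.mulVec_zero, Matrix.mulVec_mulVec] at this
        rw [hMV] at this
        simpa [Matrix.zero_mulVec, ← Matrix.mul_assoc] using this
      have hu0 : y ∘ Sum.inr = 0 := by
        have hinj : Function.Injective (Mᵀ * S * M).mulVec :=
          Matrix.mulVec_injective_iff_isUnit.mpr hPhiU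
        apply hinj
        simpa using h2
      have hw0 : y ∘ Sum.inl = 0 := by
        apply hV
        rw [show V *ᵥ (y ∘ Sum.inl) = 0 by
          have h3 := hy0'
          rw [hu0, Matrix.mulVec_zero, add_zero] at h3
          exact h3]
        simp
      funext j
      have hyj : y (e.symm j) = 0 := by
        cases h : e.symm j with
        | inl w => have := congrFun hw0 w; simpa using this
        | inr u => have := congrFun hu0 u; simpa using this
      calc x j = y (e.symm j) := by simp [hy]
        _ = 0 := hyj
    · intro hx; simp [hx]
  have hEinv : E * E⁻¹ = 1 := Matrix.mul_nonsing_inv _ (Matrix.isUnit_iff_isUnit_det _ |>.mp hEU)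
  have hPone : P = 1 := by
    calc P = P * (E * E⁻¹) := by rw [hEinv, mul_one]
      _ = (P * E) * E⁻¹ := by rw [Matrix.mul_assoc]
      _ = E * E⁻¹ := by rw [hPE]
      _ = 1 := hEinv
  exact hPone
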